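/- arXiv:1205.3664 — 2 statements merged into one kernel-verified Lean document; each statement's English description precedes it below -/
import Mathlib

section
/- (Daffodil-type lemma) Let C(z) = Σ_{n≥0} c(n)·zⁿ be a power series with nonnegative coefficients converging on |z| ≤ ρ (ρ > 0), and suppose there exist indices i < j < k with c(i), c(j), c(k) > 0 and gcd(j−i, k−i) = 1. Then for every θ with 0 < θ < 2π, |C(ρ·e^{iθ})| < C(ρ). -/
open Complex Real

/-- Daffodil-type lemma: for an aperiodic power series with nonnegative coefficients,
the modulus on the circle `|z| = ρ` away from the positive real axis is strictly
smaller than the value at `ρ`. -/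
theorem stmt5 (c : ℕ → ℝ) (hc : ∀ n, 0 ≤ c n) (ρ : ℝ) (hρ : 0 < ρ)
    (hconv : Summable fun n => c n * ρ ^ n)
    (i j k : ℕ) (hij : i < j) (hjk : j < k)
    (hci : 0 < c i) (hcj : 0 < c j) (hck : 0 < c k)
    (hgcd : Nat.gcd (j - i) (k - i) = 1) :
    ∀ θ : ℝ, 0 < θ → θ < 2 * Real.pi →
      ‖∑' n, (c n : ℂ) * (ρ * Complex.exp (θ * Complex.I)) ^ n‖ <
        ∑' n, c n * ρ ^ n := by
  intro θ hθ0 hθ2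
  have hpi : 0 < Real.pi := Real.pi_pos
  set E : ℂ := Complex.exp (θ * Complex.I) with hE
  have hnormE : ‖E‖ = 1 := by
    rw [hE]
    exact Complex.norm_exp_ofReal_mul_I θ
  set z : ℂ := (ρ : ℂ) * E with hz
  set f : ℕ → ℂ := fun n => (c n : ℂ) * z ^ n with hf
  have hnorm : ∀ n, ‖f n‖ = c n * ρ ^ n := by
    intro n
    have h1 : ‖f n‖ = |c n| * |ρ| ^ n := by
      simp [hf, hz, norm_mul, norm_pow, hnormE, Complex.norm_real, Real.norm_eq_abs]
    rw [h1, _root_.abs_of_nonneg (hc n), _root_.abs_of_pos hρ]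
  have hsumnorm : Summable fun n => ‖f n‖ := by
    simpa [hnorm] using hconv
  have hsum : Summable f := Summable.of_norm hsumnorm
  -- if E ^ m = 1 with m > 0 then m * θ is a multiple of 2π
  have hmul : ∀ m : ℕ, E ^ m = 1 → ∃ n : ℤ, (m : ℝ) * θ = n * (2 * Real.pi) := by
    intro m hm
    rw [hE, ← Complex.exp_nat_mul, Complex.exp_eq_one_iff] at hm
    obtain ⟨n, hn⟩ := hm
    refine ⟨n, ?_⟩
    have h2 : (((m : ℝ) * θ : ℝ) : ℂ) * Complex.I = (((n : ℝ) * (2 * Real.pi) : ℝ) : ℂ) * Complex.I := by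
      push_cast
      linear_combination hn
    have h3 := mul_right_cancel₀ Complex.I_ne_zero h2
    exact_mod_cast h3
  -- not both E^(j-i) = 1 and E^(k-i) = 1
  have hkey : E ^ (j - i) ≠ 1 ∨ E ^ (k - i) ≠ 1 := by
    by_contra h
    push_neg at h
    obtain ⟨h1, h2⟩ := h
    obtain ⟨a, ha⟩ := hmul _ h1
    obtain ⟨b, hb⟩ := hmul _ h2
    set m₁ := j - i
    set m₂ := k - i
    have hbez : (1 : ℤ) = m₁ * Nat.gcdA m₁ m₂ + m₂ * Nat.gcdB m₁ m₂ := by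
      have := Nat.gcd_eq_gcd_ab m₁ m₂
      rw [hgcd] at this
      exact_mod_cast this
    set x := Nat.gcdA m₁ m₂
    set y := Nat.gcdB m₁ m₂
    have hθ : θ = ((x * a + y * b : ℤ) : ℝ) * (2 * Real.pi) := by
      have h1' : ((m₁ : ℝ) * θ) = a * (2 * Real.pi) := ha
      have h2' : ((m₂ : ℝ) * θ) = b * (2 * Real.pi) := hb
      have hbez' : (1 : ℝ) = (m₁ : ℝ) * (x : ℝ) + (m₂ : ℝ) * (y : ℝ) := by
        exact_mod_cast hbez
      push_cast
      calc θ = ((m₁ : ℝ) * (x : ℝ) + (m₂ : ℝ) * (y : ℝ)) * θ := by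
              rw [← hbez']; ring
        _ = (x : ℝ) * ((m₁ : ℝ) * θ) + (y : ℝ) * ((m₂ : ℝ) * θ) := by ring
        _ = ((x : ℝ) * a + (y : ℝ) * b) * (2 * Real.pi) := by rw [h1', h2']; ring
    set N : ℤ := x * a + y * b
    have h2π : (0 : ℝ) < 2 * Real.pi := by linarith
    have hN0 : (0 : ℝ) < (N : ℝ) := by
      nlinarith [hθ0, hθ]
    have hN1 : (N : ℝ) < 1 := by
      nlinarith [hθ2, hθ]
    have : (0 : ℤ) < N := by exact_mod_cast hN0
    have : N < 1 := by exact_mod_cast hN1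
    omega
  -- pick the misaligned index q
  obtain ⟨q, hiq, hcq, hq⟩ : ∃ q, i < q ∧ 0 < c q ∧ E ^ (q - i) ≠ 1 := by
    rcases hkey with h | h
    · exact ⟨j, hij, hcj, h⟩
    · exact ⟨k, lt_trans hij hjk, hck, h⟩
  have hEne : E ≠ 0 := Complex.exp_ne_zero _
  have hzne : z ≠ 0 := mul_ne_zero (by exact_mod_cast ne_of_gt hρ) hEne
  have hfi : f i ≠ 0 := by
    simp only [hf]
    exact mul_ne_zero (by exact_mod_cast ne_of_gt hci) (pow_ne_zero _ hzne)
  have hfq : f q ≠ 0 := by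
    simp only [hf]
    exact mul_ne_zero (by exact_mod_cast ne_of_gt hcq) (pow_ne_zero _ hzne)
  -- the pair strict inequality
  have hpair : ‖f i + f q‖ < ‖f i‖ + ‖f q‖ := by
    rcases lt_or_eq_of_le (norm_add_le (f i) (f q)) with h | h
    · exact h
    exfalso
    have hray : SameRay ℝ (f i) (f q) := sameRay_iff_norm_add.mpr h
    obtain ⟨r₁, r₂, hr₁, hr₂, hr⟩ := hray.exists_pos hfi hfq
    -- r₁ • f i = r₂ • f q
    have hzn : ∀ n : ℕ, z ^ n = (ρ ^ n : ℝ) * E ^ n := by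
      intro n; rw [hz]; push_cast; ring
    have hr' : ((r₁ * (c i * ρ ^ i) : ℝ) : ℂ) * E ^ i
        = ((r₂ * (c q * ρ ^ q) : ℝ) : ℂ) * E ^ q := by
      have := hr
      simp only [hf, Complex.real_smul, hzn] at this
      push_cast at this ⊢
      linear_combination this
    set A : ℝ := r₁ * (c i * ρ ^ i)
    set B : ℝ := r₂ * (c q * ρ ^ q)
    have hA : 0 < A := by positivity
    have hB : 0 < B := by positivity
    have hEq : E ^ q = E ^ (q - i) * E ^ i := by
      rw [← pow_add]; congr 1; omega
    rw [hEq] at hr'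
    have hEi : E ^ i ≠ 0 := pow_ne_zero _ hEne
    have hAB : (A : ℂ) = (B : ℂ) * E ^ (q - i) :=
      mul_right_cancel₀ hEi (by linear_combination hr')
    have hnormpow : ‖E ^ (q - i)‖ = 1 := by
      rw [norm_pow, hnormE, one_pow]
    have hABnorm : A = B := by
      have h := congrArg norm hAB
      rw [norm_mul, hnormpow, mul_one] at h
      have h' : |A| = |B| := by
        simpa [Complex.norm_real, Real.norm_eq_abs] using h
      rwa [_root_.abs_of_pos hA, _root_.abs_of_pos hB] at h'
    apply hq
    rw [hABnorm] at hAB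
    have hBne : (B : ℂ) ≠ 0 := by exact_mod_cast ne_of_gt hB
    exact (mul_left_cancel₀ hBne (by rw [mul_one]; exact hAB)).symm
  -- split the sums at s = {i, q}
  have hiqne : i ≠ q := ne_of_lt hiq
  set s : Finset ℕ := {i, q} with hs
  have hsplit1 : (∑ n ∈ s, f n) + ∑' n : ↥((↑s : Set ℕ)ᶜ), f ↑n = ∑' n, f n :=
    Summable.sum_add_tsum_compl hsum
  have hsplit2 : (∑ n ∈ s, c n * ρ ^ n) + ∑' n : ↥((↑s : Set ℕ)ᶜ), c (n : ℕ) * ρ ^ (n : ℕ)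
      = ∑' n, c n * ρ ^ n := Summable.sum_add_tsum_compl hconv
  have hsumpair : ∑ n ∈ s, f n = f i + f q := Finset.sum_pair hiqne
  have hsumpair2 : ∑ n ∈ s, c n * ρ ^ n = c i * ρ ^ i + c q * ρ ^ q :=
    Finset.sum_pair hiqne
  have hcompl : ‖∑' n : ↥((↑s : Set ℕ)ᶜ), f ↑n‖ ≤ ∑' n : ↥((↑s : Set ℕ)ᶜ), c (n : ℕ) * ρ ^ (n : ℕ) := by
    have h1 : Summable fun n : ↥((↑s : Set ℕ)ᶜ) => ‖f ↑n‖ :=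
      hsumnorm.subtype _
    calc ‖∑' n : ↥((↑s : Set ℕ)ᶜ), f ↑n‖ ≤ ∑' n : ↥((↑s : Set ℕ)ᶜ), ‖f ↑n‖ :=
          norm_tsum_le_tsum_norm h1
      _ = _ := by simp only [hnorm]
  calc ‖∑' n, f n‖ = ‖(f i + f q) + ∑' n : ↥((↑s : Set ℕ)ᶜ), f ↑n‖ := by
        rw [← hsplit1, hsumpair]
    _ ≤ ‖f i + f q‖ + ‖∑' n : ↥((↑s : Set ℕ)ᶜ), f ↑n‖ := norm_add_le _ _
    _ < (‖f i‖ + ‖f q‖) + ∑' n : ↥((↑s : Set ℕ)ᶜ), c (n : ℕ) * ρ ^ (n : ℕ) := by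
        exact add_lt_add_of_lt_of_le hpair hcompl
    _ = (c i * ρ ^ i + c q * ρ ^ q) + ∑' n : ↥((↑s : Set ℕ)ᶜ), c (n : ℕ) * ρ ^ (n : ℕ) := by
        rw [hnorm, hnorm]
    _ = ∑' n, c n * ρ ^ n := by rw [← hsumpair2, hsplit2]
end

section
/- Let D(z) = Σ d(n)·zⁿ be an aperiodic power series with nonnegative coefficients converging at ρ_p > 0, with D(ρ_p) = 1. Then for 0 < θ < 2π, |D(ρ_p·e^{iθ})| < 1, and hence 1 − D(ρ_p·e^{iθ}) ≠ 0; i.e. the only zero of 1 − D(z) on the circle |z| = ρ_p is z = ρ_p itself. -/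
open Complex Real

/-- Uniqueness of the dominant singularity: for an aperiodic power series `D` with
nonnegative coefficients and `D(ρ_p) = 1`, we have `|D(ρ_p e^{iθ})| < 1` for
`0 < θ < 2π`, hence `1 - D(ρ_p e^{iθ}) ≠ 0`. -/
theorem stmt14 (d : ℕ → ℝ) (hd : ∀ n, 0 ≤ d n) (ρp : ℝ) (hρ : 0 < ρp)
    (hconv : Summable fun n => d n * ρp ^ n)
    (i j k : ℕ) (hij : i < j) (hjk : j < k)
    (haper : d i * d j * d k ≠ 0 ∧ Nat.gcd (j - i) (k - i) = 1)
    (hval : ∑' n, d n * ρp ^ n = 1) :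
    ∀ θ : ℝ, 0 < θ → θ < 2 * Real.pi →
      ‖∑' n, (d n : ℂ) * (ρp * Complex.exp (θ * Complex.I)) ^ n‖ < 1 ∧
      1 - ∑' n, (d n : ℂ) * (ρp * Complex.exp (θ * Complex.I)) ^ n ≠ 0 := by
  obtain ⟨hdijk, hgcd⟩ := haper
  have hdi : d i ≠ 0 := fun h => hdijk (by simp [h])
  have hdj : d j ≠ 0 := fun h => hdijk (by simp [h])
  have hdk : d k ≠ 0 := fun h => hdijk (by simp [h])
  intro θ hθ0 hθ2
  set z : ℂ := (ρp : ℂ) * Complex.exp (θ * Complex.I) with hz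
  set f : ℕ → ℂ := fun n => (d n : ℂ) * z ^ n with hf
  have hznorm : ‖z‖ = ρp := by
    rw [hz, norm_mul, Complex.norm_exp]
    simp [abs_of_pos hρ]
  have hfnorm : ∀ n, ‖f n‖ = d n * ρp ^ n := by
    intro n
    rw [hf]
    simp only [norm_mul, norm_pow, hznorm, Complex.norm_real, Real.norm_eq_abs,
      _root_.abs_of_nonneg (hd n)]
  have hfsummable : Summable f := by
    apply Summable.of_norm
    simpa only [hfnorm] using hconv
  have hnormsum : Summable fun n => ‖f n‖ := by simpa only [hfnorm] using hconv
  -- key formula : z ^ n = ρp^n * exp(n θ I)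
  have hzpow : ∀ n : ℕ, z ^ n = (ρp : ℂ) ^ n * Complex.exp (n * (θ * Complex.I)) := by
    intro n
    rw [hz, mul_pow, ← Complex.exp_nat_mul]
  have hzne : z ≠ 0 := by
    rw [hz]
    exact mul_ne_zero (by exact_mod_cast hρ.ne') (Complex.exp_ne_zero _)
  -- From exp((n)*(θ I)) = 1 we get n θ = 2π * integer
  have hexp1 : ∀ n : ℕ, Complex.exp (n * (θ * Complex.I)) = 1 →
      ∃ c : ℤ, (n : ℝ) * θ = c * (2 * Real.pi) := by
    intro n hn
    rw [Complex.exp_eq_one_iff] at hn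
    obtain ⟨c, hc⟩ := hn
    refine ⟨c, ?_⟩
    have : (((n : ℝ) * θ : ℝ) : ℂ) * Complex.I = (((c : ℝ) * (2 * Real.pi) : ℝ) : ℂ) * Complex.I := by
      push_cast
      rw [← mul_assoc] at hc
      rw [hc]; ring
    have := mul_right_cancel₀ Complex.I_ne_zero this
    exact_mod_cast this
  -- find index m > i with d m ≠ 0 and exp((m-i) θ I) ≠ 1
  have hkey : ∃ m : ℕ, i < m ∧ d m ≠ 0 ∧
      Complex.exp (((m - i : ℕ) : ℂ) * (θ * Complex.I)) ≠ 1 := by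
    by_contra hcon
    push_neg at hcon
    obtain ⟨c₁, hc₁⟩ := hexp1 (j - i) (hcon j hij hdj)
    obtain ⟨c₂, hc₂⟩ := hexp1 (k - i) (hcon k (hij.trans hjk) hdk)
    -- Bezout
    have hbez : (1 : ℤ) = (j - i : ℕ) * Nat.gcdA (j - i) (k - i)
        + (k - i : ℕ) * Nat.gcdB (j - i) (k - i) := by
      have := Nat.gcd_eq_gcd_ab (j - i) (k - i)
      rw [hgcd] at this
      exact_mod_cast this
    set A := Nat.gcdA (j - i) (k - i)
    set B := Nat.gcdB (j - i) (k - i)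
    have hθeq : θ = ((A * c₁ + B * c₂ : ℤ) : ℝ) * (2 * Real.pi) := by
      have h1 : θ = ((j - i : ℕ) * A + (k - i : ℕ) * B : ℤ) * θ := by
        rw [← hbez]; simp
      calc θ = ((j - i : ℕ) * A + (k - i : ℕ) * B : ℤ) * θ := h1
        _ = (A : ℝ) * ((j - i : ℕ) * θ) + (B : ℝ) * ((k - i : ℕ) * θ) := by push_cast; ring
        _ = (A : ℝ) * (c₁ * (2 * Real.pi)) + (B : ℝ) * (c₂ * (2 * Real.pi)) := by rw [hc₁, hc₂]
        _ = ((A * c₁ + B * c₂ : ℤ) : ℝ) * (2 * Real.pi) := by push_cast; ring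
    set c : ℤ := A * c₁ + B * c₂
    have h2π : (0 : ℝ) < 2 * Real.pi := by positivity
    have hc0 : (0 : ℝ) < (c : ℝ) := by
      by_contra h
      push_neg at h
      have : θ ≤ 0 := by
        rw [hθeq]
        exact mul_nonpos_of_nonpos_of_nonneg h h2π.le
      linarith
    have hc1 : (1 : ℝ) ≤ (c : ℝ) := by
      have : (0 : ℤ) < c := by exact_mod_cast hc0
      exact_mod_cast this
    have : 2 * Real.pi ≤ θ := by
      rw [hθeq]
      nlinarith
    linarith
  obtain ⟨m, him, hdm, hexpm⟩ := hkey
  -- exp(i θ I) ≠ exp(m θ I)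
  have hexpne : Complex.exp ((i : ℂ) * (θ * Complex.I)) ≠
      Complex.exp ((m : ℂ) * (θ * Complex.I)) := by
    intro h
    apply hexpm
    have hmdecomp : (m : ℂ) = (i : ℂ) + ((m - i : ℕ) : ℂ) := by
      push_cast [Nat.cast_sub him.le]
      ring
    rw [hmdecomp, add_mul, Complex.exp_add] at h
    have := Complex.exp_ne_zero ((i : ℂ) * (θ * Complex.I))
    field_simp at h
    rw [mul_comm]
    exact h.symm
  -- f i and f m are not on the same ray
  have hfi_ne : f i ≠ 0 := by
    rw [hf]
    exact mul_ne_zero (by exact_mod_cast hdi) (pow_ne_zero _ hzne)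
  have hfm_ne : f m ≠ 0 := by
    rw [hf]
    exact mul_ne_zero (by exact_mod_cast hdm) (pow_ne_zero _ hzne)
  have hnotray : ¬ SameRay ℝ (f i) (f m) := by
    intro hray
    obtain ⟨r, s, hr, hs, hrs⟩ := hray.exists_pos hfi_ne hfm_ne
    rw [Complex.real_smul, Complex.real_smul, hf] at hrs
    simp only [hzpow] at hrs
    have hrs' : ((r * d i * ρp ^ i : ℝ) : ℂ) * Complex.exp ((i : ℂ) * (θ * Complex.I))
        = ((s * d m * ρp ^ m : ℝ) : ℂ) * Complex.exp ((m : ℂ) * (θ * Complex.I)) := by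
      push_cast
      linear_combination hrs
    have hα : (0 : ℝ) < r * d i * ρp ^ i :=
      mul_pos (mul_pos hr (lt_of_le_of_ne (hd i) (Ne.symm hdi))) (pow_pos hρ i)
    have hβ : (0 : ℝ) < s * d m * ρp ^ m :=
      mul_pos (mul_pos hs (lt_of_le_of_ne (hd m) (Ne.symm hdm))) (pow_pos hρ m)
    -- take norms to see α = β
    have hnorm_eq : r * d i * ρp ^ i = s * d m * ρp ^ m := by
      have h2 := congrArg norm hrs'
      simpa [map_mul, Complex.norm_exp, Complex.norm_real, Real.norm_eq_abs, abs_of_pos hr, abs_of_pos hs,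
        _root_.abs_of_nonneg (hd i), _root_.abs_of_nonneg (hd m), abs_of_pos hρ]
        using h2
    rw [hnorm_eq] at hrs'
    exact hexpne (mul_left_cancel₀ (by exact_mod_cast hβ.ne') hrs')
  have hstrict : ‖f i + f m‖ < ‖f i‖ + ‖f m‖ :=
    not_sameRay_iff_norm_add_lt.mp hnotray
  -- split the sum over {i, m}
  have hne_im : i ≠ m := him.ne
  set S : Finset ℕ := {i, m} with hS
  have hsplit : (∑ n ∈ S, f n) + ∑' n : ↑(↑S : Set ℕ)ᶜ, f n = ∑' n, f n :=
    Summable.sum_add_tsum_compl hfsummable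
  have hsplitnorm : (∑ n ∈ S, ‖f n‖) + ∑' n : ↑(↑S : Set ℕ)ᶜ, ‖f n‖ = ∑' n, ‖f n‖ :=
    Summable.sum_add_tsum_compl hnormsum
  have hSsum : ∑ n ∈ S, f n = f i + f m := Finset.sum_pair hne_im
  have hSsumnorm : ∑ n ∈ S, ‖f n‖ = ‖f i‖ + ‖f m‖ := Finset.sum_pair hne_im
  have htot : ∑' n, ‖f n‖ = 1 := by
    simp only [hfnorm]
    exact hval
  have hmain : ‖∑' n, f n‖ < 1 := by
    calc ‖∑' n, f n‖ = ‖(∑ n ∈ S, f n) + ∑' n : ↑(↑S : Set ℕ)ᶜ, f n‖ := by rw [hsplit]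
      _ ≤ ‖∑ n ∈ S, f n‖ + ‖∑' n : ↑(↑S : Set ℕ)ᶜ, f n‖ := norm_add_le _ _
      _ ≤ ‖f i + f m‖ + ∑' n : ↑(↑S : Set ℕ)ᶜ, ‖f n‖ := by
          rw [hSsum]
          gcongr
          exact norm_tsum_le_tsum_norm (hnormsum.subtype _)
      _ < (‖f i‖ + ‖f m‖) + ∑' n : ↑(↑S : Set ℕ)ᶜ, ‖f n‖ := by
          exact add_lt_add_of_lt_of_le hstrict le_rfl
      _ = (∑ n ∈ S, ‖f n‖) + ∑' n : ↑(↑S : Set ℕ)ᶜ, ‖f n‖ := by rw [hSsumnorm]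
      _ = ∑' n, ‖f n‖ := hsplitnorm
      _ = 1 := htot
  refine ⟨hmain, ?_⟩
  intro hcontra
  rw [sub_eq_zero] at hcontra
  rw [← hcontra] at hmain
  simp at hmain
end
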